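/- The Ševera–Weinstein bracket, obtained from the Courant bracket on TM ⊕ T*M by adding i(X∧Y)Φ to the T*M-component for a 3-form Φ, satisfies the Jacobi-type property iii) of a skew-symmetric Courant algebroid if and only if dΦ = 0. -/

import Mathlib

open scoped Manifold

section CartanCalculus
variable {A : Type*} [CommRing A] [Algebra ℝ A]

lemma Derivation.commutator_smul_right (X Z : Derivation ℝ A A) (f : A) :
    ⁅X, f • Z⁆ = f • ⁅X, Z⁆ + (X f) • Z := by
  ext a
  simp only [Derivation.commutator_apply, Derivation.smul_apply, Derivation.add_apply,
    smul_eq_mul, Derivation.leibniz]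
  ring

/-- The differential `df` of a function, as an `A`-linear form on derivations. -/
noncomputable def dF (f : A) : Derivation ℝ A A →ₗ[A] A where
  toFun Z := Z f
  map_add' Z W := by simp
  map_smul' g Z := by simp

/-- The Lie derivative `L_X β` of a `1`-form `β` along a vector field `X`. -/
noncomputable def lieDer (X : Derivation ℝ A A) (β : Derivation ℝ A A →ₗ[A] A) :
    Derivation ℝ A A →ₗ[A] A where
  toFun Z := X (β Z) - β ⁅X, Z⁆
  map_add' Z W := by simp only [map_add, lie_add]; ring
  map_smul' f Z := by
    simp only [map_smul, smul_eq_mul, Derivation.leibniz, RingHom.id_apply,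
      Derivation.commutator_smul_right, map_add, map_smul]
    ring

/-- The interior product `i(Y)(dα)` for a `1`-form `α` and vector field `Y`. -/
noncomputable def iotaD (Y : Derivation ℝ A A) (α : Derivation ℝ A A →ₗ[A] A) :
    Derivation ℝ A A →ₗ[A] A where
  toFun Z := Y (α Z) - Z (α Y) - α ⁅Y, Z⁆
  map_add' Z W := by simp only [map_add, add_lie, lie_add, Derivation.add_apply]; ring
  map_smul' f Z := by
    simp only [map_smul, smul_eq_mul, Derivation.leibniz, RingHom.id_apply,
      Derivation.commutator_smul_right, map_add, map_smul, Derivation.smul_apply]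
    ring

/-- The neutral pairing on `TM ⊕ T*M`: `g(X⊕α, Y⊕β) = (1/2)(β(X) + α(Y))`. -/
noncomputable def genPairing
    (p q : Derivation ℝ A A × (Derivation ℝ A A →ₗ[A] A)) : A :=
  (1/2 : ℝ) • (q.2 p.1 + p.2 q.1)

/-- The Dorfman product `(X⊕α)⋆(Y⊕β) = [X,Y] ⊕ (L_X β − i(Y)dα)`. -/
noncomputable def dorfman
    (p q : Derivation ℝ A A × (Derivation ℝ A A →ₗ[A] A)) :
    Derivation ℝ A A × (Derivation ℝ A A →ₗ[A] A) :=
  (⁅p.1, q.1⁆, lieDer p.1 q.2 - iotaD q.1 p.2)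

/-- The Courant bracket `[X⊕α, Y⊕β] = [X,Y] ⊕ (L_X β − L_Y α − (1/2)d(β(X) − α(Y)))`. -/
noncomputable def courantBracket
    (p q : Derivation ℝ A A × (Derivation ℝ A A →ₗ[A] A)) :
    Derivation ℝ A A × (Derivation ℝ A A →ₗ[A] A) :=
  (⁅p.1, q.1⁆, lieDer p.1 q.2 - lieDer q.1 p.2 - (1/2 : ℝ) • dF (q.2 p.1 - p.2 q.1))

end CartanCalculus

/-- Sections of the generalized tangent bundle `TM ⊕ T*M`, modelled algebraically. -/
abbrev GenSec (A : Type*) [CommRing A] [Algebra ℝ A] :=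
  Derivation ℝ A A × (Derivation ℝ A A →ₗ[A] A)
section Key
variable {A : Type*} [CommRing A] [Algebra ℝ A]

@[simp] lemma dF_apply (f : A) (Z : Derivation ℝ A A) : dF f Z = Z f := rfl
@[simp] lemma lieDer_apply (X : Derivation ℝ A A) (β : Derivation ℝ A A →ₗ[A] A)
    (Z : Derivation ℝ A A) : lieDer X β Z = X (β Z) - β ⁅X, Z⁆ := rfl
@[simp] lemma iotaD_apply (Y : Derivation ℝ A A) (α : Derivation ℝ A A →ₗ[A] A)
    (Z : Derivation ℝ A A) : iotaD Y α Z = Y (α Z) - Z (α Y) - α ⁅Y, Z⁆ := rfl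

variable (Φ : Derivation ℝ A A →ₗ[A] Derivation ℝ A A →ₗ[A] Derivation ℝ A A →ₗ[A] A)

/-- twisted bracket -/
noncomputable def twist (p q : GenSec A) : GenSec A :=
  courantBracket p q + (0, Φ p.1 q.1)

lemma key (hΦ₁ : ∀ X Y Z, Φ X Y Z = - Φ Y X Z) (hΦ₂ : ∀ X Y Z, Φ X Y Z = - Φ X Z Y)
    (X Y Z W : Derivation ℝ A A) (α β γ : Derivation ℝ A A →ₗ[A] A) :
    (twist Φ (twist Φ (X, α) (Y, β)) (Z, γ) + twist Φ (twist Φ (Y, β) (Z, γ)) (X, α)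
       + twist Φ (twist Φ (Z, γ) (X, α)) (Y, β)).2 W
      = ((1/3 : ℝ) • dF (genPairing (twist Φ (X, α) (Y, β)) (Z, γ)
          + genPairing (twist Φ (Y, β) (Z, γ)) (X, α)
          + genPairing (twist Φ (Z, γ) (X, α)) (Y, β))) W
        - (X (Φ Y Z W) - Y (Φ X Z W) + Z (Φ X Y W) - W (Φ X Y Z)
          - Φ ⁅X, Y⁆ Z W + Φ ⁅X, Z⁆ Y W - Φ ⁅X, W⁆ Y Z
          - Φ ⁅Y, Z⁆ X W + Φ ⁅Y, W⁆ X Z - Φ ⁅Z, W⁆ X Y) := by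
  have hcyc : ∀ a b c, Φ a b c = Φ b c a := fun a b c => by
    rw [hΦ₁ a b c, hΦ₂ b a c, neg_neg]
  have hcyc' : ∀ a b c, Φ a b c = Φ c a b := fun a b c => by rw [hcyc, hcyc]
  have hL1 : ⁅Y, X⁆ = -⁅X, Y⁆ := (lie_skew Y X).symm
  have hL2 : ⁅Z, Y⁆ = -⁅Y, Z⁆ := (lie_skew Z Y).symm
  have hL3 : ⁅Z, X⁆ = -⁅X, Z⁆ := (lie_skew Z X).symm
  have hP1 : Φ Y Z X = Φ X Y Z := hcyc' Y Z X
  have hP2 : Φ Z X Y = Φ X Y Z := hcyc Z X Y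
  have hP3 : Φ Z X W = -Φ X Z W := hΦ₁ Z X W
  have hP4 : Φ X Y ⁅Z, W⁆ = Φ ⁅Z, W⁆ X Y := hcyc' X Y ⁅Z, W⁆
  have hP5 : Φ Y Z ⁅X, W⁆ = Φ ⁅X, W⁆ Y Z := hcyc' Y Z ⁅X, W⁆
  have hP6 : Φ Z X ⁅Y, W⁆ = -Φ ⁅Y, W⁆ X Z := (hcyc' Z X ⁅Y, W⁆).trans (hΦ₂ _ _ _)
  simp only [twist, courantBracket, genPairing, Prod.snd_add, Prod.fst_add, Prod.smul_snd,
    Prod.smul_fst, LinearMap.add_apply, LinearMap.sub_apply, LinearMap.smul_apply,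
    dF_apply, lieDer_apply, iotaD_apply, add_zero, zero_add, map_zero,
    LinearMap.zero_apply, hL1, hL2, hL3, hP1, hP2, hP3, hP4, hP5, hP6,
    map_add, map_sub, map_smul, map_neg, neg_lie, lie_neg, neg_neg,
    LinearMap.neg_apply, Derivation.neg_apply, Derivation.map_smul, lie_lie,
    Derivation.commutator_apply, smul_sub, smul_add, smul_neg]
  module

end Key

section Manifold
variable {E' : Type*} [NormedAddCommGroup E'] [NormedSpace ℝ E']
  {H : Type*} [TopologicalSpace H] (I : ModelWithCorners ℝ E' H)
  (M : Type*) [TopologicalSpace M] [ChartedSpace H M] [IsManifold I (⊤ : ℕ∞) M]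

/-- The ℝ-algebra of smooth real functions on the manifold `M`. -/
noncomputable abbrev SmoothFn := C^(⊤ : ℕ∞)⟮I, M; ℝ⟯

/-- The Ševera–Weinstein bracket, obtained from the Courant bracket on `TM ⊕ T*M` by
adding `i(X∧Y)Φ` to the `T*M`-component for a `3`-form `Φ`, satisfies the Jacobi-type
property iii) of a skew-symmetric Courant algebroid if and only if `dΦ = 0`. -/
theorem severa_weinstein_jacobi_iff_closed
    (Φ : Derivation ℝ (SmoothFn I M) (SmoothFn I M) →ₗ[SmoothFn I M]
         Derivation ℝ (SmoothFn I M) (SmoothFn I M) →ₗ[SmoothFn I M]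
         Derivation ℝ (SmoothFn I M) (SmoothFn I M) →ₗ[SmoothFn I M] SmoothFn I M)
    (hΦ₁ : ∀ X Y Z, Φ X Y Z = - Φ Y X Z)
    (hΦ₂ : ∀ X Y Z, Φ X Y Z = - Φ X Z Y)
    (brΦ : GenSec (SmoothFn I M) → GenSec (SmoothFn I M) → GenSec (SmoothFn I M))
    (hbrΦ : ∀ p q, brΦ p q = courantBracket p q + (0, Φ p.1 q.1)) :
    (∀ p q r : GenSec (SmoothFn I M),
        brΦ (brΦ p q) r + brΦ (brΦ q r) p + brΦ (brΦ r p) q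
          = (1/3 : ℝ) • ((0, dF (genPairing (brΦ p q) r + genPairing (brΦ q r) p
              + genPairing (brΦ r p) q)) : GenSec (SmoothFn I M)))
    ↔ (∀ X₀ X₁ X₂ X₃ : Derivation ℝ (SmoothFn I M) (SmoothFn I M),
        X₀ (Φ X₁ X₂ X₃) - X₁ (Φ X₀ X₂ X₃) + X₂ (Φ X₀ X₁ X₃) - X₃ (Φ X₀ X₁ X₂)
          - Φ ⁅X₀, X₁⁆ X₂ X₃ + Φ ⁅X₀, X₂⁆ X₁ X₃ - Φ ⁅X₀, X₃⁆ X₁ X₂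
          - Φ ⁅X₁, X₂⁆ X₀ X₃ + Φ ⁅X₁, X₃⁆ X₀ X₂ - Φ ⁅X₂, X₃⁆ X₀ X₁ = 0) := by
  have htw : ∀ p q, brΦ p q = twist Φ p q := hbrΦ
  constructor
  · intro h X₀ X₁ X₂ X₃
    have H := congrArg (fun s : GenSec (SmoothFn I M) => s.2 X₃) (h (X₀, 0) (X₁, 0) (X₂, 0))
    simp only [htw, Prod.smul_snd] at H
    have K := key Φ hΦ₁ hΦ₂ X₀ X₁ X₂ X₃ 0 0 0
    have H2 := H.symm.trans K
    exact sub_eq_self.mp H2.symm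
  · intro h p q r
    obtain ⟨X, α⟩ := p
    obtain ⟨Y, β⟩ := q
    obtain ⟨Z, γ⟩ := r
    refine Prod.ext ?_ ?_
    · simp only [htw, twist, courantBracket, Prod.fst_add, Prod.smul_fst, smul_zero, add_zero]
      refine Derivation.ext fun f => ?_
      simp only [Derivation.add_apply, Derivation.commutator_apply, Derivation.zero_apply,
        map_sub]
      ring
    · apply LinearMap.ext
      intro W
      simp only [htw, Prod.smul_snd]
      rw [key Φ hΦ₁ hΦ₂ X Y Z W α β γ, h X Y Z W, sub_zero]

end Manifold
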